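/- Let Λ > 0, 0 < α ≤ Λ, β > 0, c₂ > 0, and let g : [0,Λ] → ℝ be a function such that for every β' ∈ [0, β]: sup_{λ∈[0,Λ]} |(g(λ)λ − 1) λ^{β'/2}| ≤ c₂ α^{β'/2}. Let s : [0,Λ] → [0,∞) be nondecreasing such that λ ↦ s(λ)²/λ^β is nonincreasing on (0,Λ]. Then sup_{λ∈[0,Λ]} |(g(λ)λ − 1) s(λ)| ≤ c₂ s(α). -/
import Mathlib


/-- Bias bound for a general spectral regularization filter `g` at level `α` relative to a
general source function `s`: if `|(g(λ)λ − 1) λ^{β'/2}| ≤ c₂ α^{β'/2}` for all `β' ∈ [0, β]`,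
`s` is nonnegative and nondecreasing on `[0,Λ]`, and `λ ↦ s(λ)²/λ^β` is nonincreasing on
`(0,Λ]`, then `|(g(λ)λ − 1) s(λ)| ≤ c₂ s(α)` on `[0,Λ]`. -/
theorem stmt13 (Λ α β c₂ : ℝ) (hΛ : 0 < Λ) (hα : 0 < α) (hαΛ : α ≤ Λ)
    (hβ : 0 < β) (hc₂ : 0 < c₂) (g s : ℝ → ℝ)
    (hg : ∀ β' ∈ Set.Icc (0 : ℝ) β, ∀ x ∈ Set.Icc (0 : ℝ) Λ,
      |(g x * x - 1) * x ^ (β' / 2)| ≤ c₂ * α ^ (β' / 2))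
    (hs0 : ∀ x ∈ Set.Icc (0 : ℝ) Λ, 0 ≤ s x)
    (hmono : MonotoneOn s (Set.Icc (0 : ℝ) Λ))
    (hanti : AntitoneOn (fun x => s x ^ 2 / x ^ β) (Set.Ioc (0 : ℝ) Λ)) :
    ∀ x ∈ Set.Icc (0 : ℝ) Λ, |(g x * x - 1) * s x| ≤ c₂ * s α := by
  intro x hx
  obtain ⟨hx0, hxΛ⟩ := hx
  have hsx0 := hs0 x ⟨hx0, hxΛ⟩
  have hsa0 := hs0 α ⟨hα.le, hαΛ⟩
  rcases le_or_gt x α with hxα | hαx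
  · have h0 := hg 0 ⟨le_refl 0, hβ.le⟩ x ⟨hx0, hxΛ⟩
    simp only [zero_div, Real.rpow_zero, mul_one] at h0
    have hsx := hmono ⟨hx0, hxΛ⟩ ⟨hα.le, hαΛ⟩ hxα
    calc |(g x * x - 1) * s x| = |g x * x - 1| * s x := by
          rw [abs_mul, abs_of_nonneg hsx0]
      _ ≤ c₂ * s α := mul_le_mul h0 hsx hsx0 hc₂.le
  · have hx0' : 0 < x := hα.trans hαx
    have hb := hg β ⟨hβ.le, le_refl β⟩ x ⟨hx0, hxΛ⟩
    have hrat := hanti ⟨hα, hαΛ⟩ ⟨hx0', hxΛ⟩ hαx.le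
    simp only at hrat
    have hxb : (0:ℝ) < x ^ (β/2) := Real.rpow_pos_of_pos hx0' _
    have hab : (0:ℝ) < α ^ (β/2) := Real.rpow_pos_of_pos hα _
    have hxsq : (x ^ (β/2)) ^ 2 = x ^ β := by
      rw [← Real.rpow_natCast (x ^ (β/2)) 2, ← Real.rpow_mul hx0'.le]
      norm_num
    have hasq : (α ^ (β/2)) ^ 2 = α ^ β := by
      rw [← Real.rpow_natCast (α ^ (β/2)) 2, ← Real.rpow_mul hα.le]
      norm_num
    have key : s x * α ^ (β/2) ≤ s α * x ^ (β/2) := by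
      have h1 : (s x / x ^ (β/2)) ^ 2 ≤ (s α / α ^ (β/2)) ^ 2 := by
        rw [div_pow, div_pow, hxsq, hasq]
        exact hrat
      have h2 : s x / x ^ (β/2) ≤ s α / α ^ (β/2) := by
        have := (pow_le_pow_iff_left₀ (div_nonneg hsx0 hxb.le)
          (div_nonneg hsa0 hab.le) (two_ne_zero)).mp h1
        exact this
      rw [div_le_div_iff₀ hxb hab] at h2
      linarith
    have hb' : |g x * x - 1| * x ^ (β/2) ≤ c₂ * α ^ (β/2) := by
      rwa [abs_mul, abs_of_nonneg hxb.le] at hb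
    have habs : |(g x * x - 1) * s x| = |g x * x - 1| * s x := by
      rw [abs_mul, abs_of_nonneg hsx0]
    rw [habs]
    have h3 : |g x * x - 1| * s x * (x ^ (β/2) * α ^ (β/2)) ≤
        c₂ * s α * (x ^ (β/2) * α ^ (β/2)) := by
      have := mul_le_mul hb' key (mul_nonneg hsx0 hab.le)
        (mul_nonneg hc₂.le hab.le)
      nlinarith [abs_nonneg (g x * x - 1)]
    exact le_of_mul_le_mul_right h3 (mul_pos hxb hab)
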